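/- arXiv:1106.1456 — 2 statements merged into one kernel-verified Lean document; each statement's English description precedes it below -/
import Mathlib

section
/- For any integer x ≥ 1 there exists an integrable function h : ℝ → ℂ such that ∫_ℝ |h(t)| dt ≤ 7 + log x, and for every integer n, ∫_ℝ h(t) e^{2πint} dt equals 1 if |n| ≤ x and equals 0 otherwise. -/
open Real Complex MeasureTheory Set

lemma tri_half (b : ℝ) (c : ℂ) (hc : c ≠ 0) :
    ∫ ξ in (0:ℝ)..b, ((b - ξ : ℝ) : ℂ) * Complex.exp (c * ξ)
      = (Complex.exp (c * b) - 1 - c * b) / c^2 := by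
  have key : ∀ ξ ∈ Set.uIcc (0:ℝ) b, HasDerivAt
      (fun ξ : ℝ => (((b : ℂ) - ξ)/c + 1/c^2) * Complex.exp (c * ξ))
      (((b - ξ : ℝ) : ℂ) * Complex.exp (c * ξ)) ξ := by
    intro ξ _
    have h1 : HasDerivAt (fun ξ : ℝ => ((b : ℂ) - ξ)/c + 1/c^2) (-1/c) ξ := by
      have h0 : HasDerivAt (fun ξ : ℝ => ((b : ℂ) - ξ)) (-1) ξ := by
        simpa using ((hasDerivAt_id ξ).ofReal_comp.const_sub (b : ℂ))
      exact (h0.div_const c).add_const (1/c^2)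
    have h2 : HasDerivAt (fun ξ : ℝ => Complex.exp (c * ξ)) (c * Complex.exp (c * ξ)) ξ := by
      have h0 : HasDerivAt (fun ξ : ℝ => c * (ξ : ℂ)) c ξ := by
        simpa using (hasDerivAt_id ξ).ofReal_comp.const_mul c
      exact ((Complex.hasDerivAt_exp (c * ξ)).comp ξ h0).congr_deriv (mul_comm _ _)
    have := h1.mul h2
    refine this.congr_deriv ?_
    field_simp
    push_cast; ring
  rw [intervalIntegral.integral_eq_sub_of_hasDerivAt key (by
    apply Continuous.intervalIntegrable; continuity)]
  push_cast
  field_simp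
  simp; ring

lemma tri_ft (b t : ℝ) (hb : 0 < b) (ht : t ≠ 0) :
    ∫ ξ : ℝ, Complex.exp (((-2 * π * ξ * t : ℝ) : ℂ) * Complex.I) • ((max (b - |ξ|) 0 : ℝ) : ℂ)
      = ((Real.sin (π * b * t))^2 / (π^2 * t^2) : ℝ) := by
  set c : ℂ := ((-2 * π * t : ℝ) : ℂ) * Complex.I with hcdef
  have hcne : c ≠ 0 := by
    simp [hcdef, Complex.ext_iff, Real.pi_ne_zero, ht]
  set f : ℝ → ℂ := fun ξ =>
    Complex.exp (((-2 * π * ξ * t : ℝ) : ℂ) * Complex.I) • ((max (b - |ξ|) 0 : ℝ) : ℂ) with hf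
  have hvanish : ∀ ξ ∉ Set.Ioc (-b) b, f ξ = 0 := by
    intro ξ hξ
    have : b ≤ |ξ| := by
      rcases abs_cases ξ with ⟨h1, h2⟩ | ⟨h1, h2⟩ <;>
        simp only [Set.mem_Ioc, not_and_or, not_lt, not_le] at hξ <;> rcases hξ with h | h <;> linarith
    simp [hf, max_eq_right (by linarith : b - |ξ| ≤ 0)]
  have hcont : Continuous f := by
    apply Continuous.fun_smul
    · apply Complex.continuous_exp.comp
      continuity
    · continuity
  have step1 : (∫ ξ : ℝ, f ξ) = ∫ ξ in (-b)..b, f ξ := by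
    rw [intervalIntegral.integral_of_le (by linarith)]
    exact (MeasureTheory.setIntegral_eq_integral_of_forall_compl_eq_zero hvanish).symm
  have step2 : (∫ ξ in (-b)..b, f ξ) = (∫ ξ in (-b)..(0:ℝ), f ξ) + ∫ ξ in (0:ℝ)..b, f ξ :=
    (intervalIntegral.integral_add_adjacent_intervals
      (hcont.intervalIntegrable _ _) (hcont.intervalIntegrable _ _)).symm
  have congr_pos : (∫ ξ in (0:ℝ)..b, f ξ)
      = ∫ ξ in (0:ℝ)..b, ((b - ξ : ℝ) : ℂ) * Complex.exp (c * ξ) := by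
    apply intervalIntegral.integral_congr
    intro ξ hξ
    rw [Set.uIcc_of_le (le_of_lt hb)] at hξ
    have h0 : (0:ℝ) ≤ ξ := hξ.1
    have h1 : ξ ≤ b := hξ.2
    simp only [hf, _root_.abs_of_nonneg h0, max_eq_left (by linarith : (0:ℝ) ≤ b - ξ)]
    rw [smul_eq_mul, mul_comm]
    congr 2
    push_cast [hcdef]
    ring
  have congr_neg : (∫ ξ in (-b)..(0:ℝ), f ξ)
      = ∫ ξ in (0:ℝ)..b, ((b - ξ : ℝ) : ℂ) * Complex.exp ((-c) * ξ) := by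
    rw [show (∫ ξ in (0:ℝ)..b, ((b - ξ : ℝ) : ℂ) * Complex.exp ((-c) * ξ))
        = ∫ ξ in (0:ℝ)..b, f (-ξ) from ?_, intervalIntegral.integral_comp_neg f]
    · simp
    · apply intervalIntegral.integral_congr
      intro ξ hξ
      rw [Set.uIcc_of_le (le_of_lt hb)] at hξ
      have h0 : (0:ℝ) ≤ ξ := hξ.1
      have h1 : ξ ≤ b := hξ.2
      simp only [hf, abs_neg, _root_.abs_of_nonneg h0, max_eq_left (by linarith : (0:ℝ) ≤ b - ξ)]
      rw [smul_eq_mul, mul_comm]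
      congr 2
      push_cast [hcdef]
      ring
  rw [step1, step2, congr_pos, congr_neg, tri_half b c hcne, tri_half b (-c) (by simpa using hcne)]
  have hexp : Complex.exp (c * b) + Complex.exp (-c * b) = 2 * Real.cos (2 * π * t * b) := by
    have h1 : c * b = ((-(2 * π * t * b) : ℝ) : ℂ) * Complex.I := by push_cast [hcdef]; ring
    have h2 : -c * b = (((2 * π * t * b) : ℝ) : ℂ) * Complex.I := by push_cast [hcdef]; ring
    rw [h1, h2, Complex.exp_mul_I, Complex.exp_mul_I,
      show ((-(2 * π * t * b) : ℝ) : ℂ) = -(((2 * π * t * b) : ℝ) : ℂ) by push_cast; ring,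
      Complex.cos_neg, Complex.sin_neg, Complex.ofReal_cos]
    ring
  have hsin : (Real.sin (π * b * t))^2 = 1/2 - Real.cos (2 * π * t * b) / 2 := by
    rw [Real.sin_sq_eq_half_sub]
    ring_nf
  have hc2 : c^2 = ((-(4 * π^2 * t^2) : ℝ) : ℂ) := by
    rw [hcdef]
    push_cast
    rw [mul_pow, Complex.I_sq]
    ring
  have hπt : (π^2 * t^2 : ℝ) ≠ 0 := by positivity
  rw [show ((-c)^2 : ℂ) = c^2 by ring, ← add_div,
    show Complex.exp (-c * ↑b) - 1 - -c * ↑b + (Complex.exp (c * ↑b) - 1 - c * ↑b)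
      = Complex.exp (c * ↑b) + Complex.exp (-c * ↑b) - 2 by ring,
    hexp, hc2, hsin]
  have hπ : ((π : ℝ) : ℂ) ≠ 0 := Complex.ofReal_ne_zero.mpr Real.pi_ne_zero
  have htc : ((t : ℝ) : ℂ) ≠ 0 := Complex.ofReal_ne_zero.mpr ht
  push_cast
  field_simp
  ring

set_option maxHeartbeats 1000000 in
lemma kernel_bound (S : ℝ) (hS : 3 ≤ S) :
    Integrable (fun t : ℝ => ((Real.sin (π * S * t) * Real.sin (π * t) / (π^2 * t^2) : ℝ) : ℂ))
    ∧ (∫ t : ℝ, ‖((Real.sin (π * S * t) * Real.sin (π * t) / (π^2 * t^2) : ℝ) : ℂ)‖)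
        ≤ 3 + Real.log S := by
  have hπ := Real.pi_gt_three
  have hπ0 := Real.pi_pos
  have hS0 : (0:ℝ) < S := by linarith
  set Hc : ℝ → ℂ := fun t => ((Real.sin (π * S * t) * Real.sin (π * t) / (π^2 * t^2) : ℝ) : ℂ)
    with hHc
  set g1 : ℝ → ℝ := Set.indicator (Set.Icc (-(1/S)) (1/S)) (fun _ => S) with hg1
  set g2 : ℝ → ℝ := Set.indicator (Set.Ioc (1/S) 1) (fun t => 1/(π*t)) with hg2
  set g3 : ℝ → ℝ := Set.indicator (Set.Ico (-1) (-(1/S))) (fun t => 1/(π*(-t))) with hg3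
  set g4 : ℝ → ℝ := Set.indicator (Set.Ioi (1:ℝ)) (fun t => 1/(π^2*t^2)) with hg4
  set g5 : ℝ → ℝ := fun t => g4 (-t) with hg5
  -- nonnegativity
  have hg1nn : ∀ t, 0 ≤ g1 t := fun t => Set.indicator_nonneg (fun _ _ => le_of_lt hS0) t
  have hg2nn : ∀ t, 0 ≤ g2 t := fun t => Set.indicator_nonneg
    (fun y hy => by
      have : (0:ℝ) < y := lt_trans (by positivity) hy.1
      positivity) t
  have hg3nn : ∀ t, 0 ≤ g3 t := fun t => Set.indicator_nonneg
    (fun y hy => by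
      have h1S : (0:ℝ) < 1/S := by positivity
      have hy2 := hy.2
      have : (0:ℝ) < -y := by linarith
      positivity) t
  have hg4nn : ∀ t, 0 ≤ g4 t := fun t => Set.indicator_nonneg
    (fun y hy => by
      have : (0:ℝ) < y := lt_trans one_pos hy
      positivity) t
  have hg5nn : ∀ t, 0 ≤ g5 t := fun t => hg4nn (-t)
  -- integrability
  have ig1 : Integrable g1 := by
    rw [hg1, integrable_indicator_iff measurableSet_Icc]
    exact integrableOn_const measure_Icc_lt_top.ne
  have ig2 : Integrable g2 := by
    rw [hg2, integrable_indicator_iff measurableSet_Ioc]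
    have hco : ContinuousOn (fun t : ℝ => 1/(π*t)) (Set.Icc (1/S) 1) := by
      apply ContinuousOn.div continuousOn_const (continuousOn_const.mul continuousOn_id)
      intro y hy
      have : (0:ℝ) < y := lt_of_lt_of_le (by positivity) hy.1
      show π * y ≠ 0; positivity
    exact (hco.integrableOn_compact isCompact_Icc).mono_set Set.Ioc_subset_Icc_self
  have ig3 : Integrable g3 := by
    rw [hg3, integrable_indicator_iff measurableSet_Ico]
    have hco : ContinuousOn (fun t : ℝ => 1/(π*(-t))) (Set.Icc (-1) (-(1/S))) := by
      apply ContinuousOn.div continuousOn_const (continuousOn_const.mul continuousOn_id.neg)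
      intro y hy
      have h1S : (0:ℝ) < 1/S := by positivity
      have : (0:ℝ) < -y := by have := hy.2; linarith
      show π * -y ≠ 0; positivity
    exact (hco.integrableOn_compact isCompact_Icc).mono_set Set.Ico_subset_Icc_self
  have hrpow_eq : Set.EqOn (fun t : ℝ => 1/π^2 * t^(-2:ℝ)) (fun t : ℝ => 1/(π^2*t^2))
      (Set.Ioi 1) := by
    intro t ht
    have ht1 : (1:ℝ) < t := ht
    have ht0 : (0:ℝ) < t := lt_trans one_pos ht1
    simp only
    rw [show (-2:ℝ) = -((2:ℕ):ℝ) by norm_num, Real.rpow_neg (le_of_lt ht0), Real.rpow_natCast]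
    field_simp
  have ig4 : Integrable g4 := by
    rw [hg4, integrable_indicator_iff measurableSet_Ioi]
    exact MeasureTheory.IntegrableOn.congr_fun
      ((integrableOn_Ioi_rpow_of_lt (by norm_num : (-2:ℝ) < -1) one_pos).const_mul (1/π^2))
      hrpow_eq measurableSet_Ioi
  have ig5 : Integrable g5 := ig4.comp_neg
  -- integral values
  have hI1 : (∫ t, g1 t) = 2 := by
    rw [hg1, MeasureTheory.integral_indicator measurableSet_Icc, setIntegral_const,
      Real.volume_real_Icc, smul_eq_mul, max_eq_left (by
        have : (0:ℝ) < 1/S := by positivity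
        linarith : (0:ℝ) ≤ 1/S - -(1/S))]
    field_simp
    ring
  have h0notin : (0:ℝ) ∉ Set.uIcc (1/S) 1 := by
    rw [Set.uIcc_of_le (by rw [div_le_one hS0]; linarith)]
    intro h
    have : (0:ℝ) < 1/S := by positivity
    exact absurd h.1 (by linarith)
  have hI2 : (∫ t, g2 t) = 1/π * Real.log S := by
    rw [hg2, MeasureTheory.integral_indicator measurableSet_Ioc,
      ← intervalIntegral.integral_of_le (by rw [div_le_one hS0]; linarith)]
    simp_rw [show ∀ t : ℝ, 1/(π*t) = 1/π * (1/t) from fun t => by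
      rw [div_mul_div_comm, one_mul]]
    rw [intervalIntegral.integral_const_mul, integral_one_div h0notin, one_div_one_div]
  have h0notin' : (0:ℝ) ∉ Set.uIcc (-1 : ℝ) (-(1/S)) := by
    rw [Set.uIcc_of_le (by
      have h1 : 1/S ≤ 1 := by
        rw [div_le_one hS0]; linarith
      linarith)]
    intro h
    have : (0:ℝ) < 1/S := by positivity
    exact absurd h.2 (by linarith)
  have hI3 : (∫ t, g3 t) = 1/π * Real.log S := by
    rw [hg3, MeasureTheory.integral_indicator measurableSet_Ico,
      setIntegral_congr_set Ico_ae_eq_Ioc,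
      ← intervalIntegral.integral_of_le (by
        have : 1/S ≤ 1 := by rw [div_le_one hS0]; linarith
        linarith)]
    simp_rw [show ∀ t : ℝ, 1/(π*(-t)) = 1/π * -(1/t) from fun t => by
      rw [one_div, one_div, one_div, mul_neg, inv_neg, mul_inv]; ring]
    rw [intervalIntegral.integral_const_mul, intervalIntegral.integral_neg,
      integral_one_div h0notin']
    rw [show (-(1/S))/(-1 : ℝ) = 1/S by ring,
      show Real.log (1/S) = -Real.log S by rw [one_div, Real.log_inv]]
    ring
  have hI4 : (∫ t, g4 t) = 1/π^2 := by
    rw [hg4, MeasureTheory.integral_indicator measurableSet_Ioi,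
      ← setIntegral_congr_fun measurableSet_Ioi hrpow_eq, MeasureTheory.integral_const_mul,
      integral_Ioi_rpow_of_lt (by norm_num : (-2:ℝ) < -1) one_pos]
    norm_num
  have hI5 : (∫ t, g5 t) = 1/π^2 := by
    rw [hg5]
    rw [MeasureTheory.integral_neg_eq_self]
    exact hI4
  -- measurability of Hc
  have hmeas : AEStronglyMeasurable Hc volume := by
    apply Measurable.aestronglyMeasurable
    apply Complex.measurable_ofReal.comp
    apply Measurable.div
    · exact ((Real.continuous_sin.comp (continuous_const.mul continuous_id)).mul
        (Real.continuous_sin.comp (continuous_const.mul continuous_id))).measurable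
    · exact (continuous_const.mul (continuous_pow 2)).measurable
  -- pointwise bound
  have hptwise : ∀ t : ℝ, t ≠ 0 → ‖Hc t‖ ≤ g1 t + g2 t + g3 t + g4 t + g5 t := by
    intro t ht
    have ht2 : (0:ℝ) < t^2 := by positivity
    have htabs : (0:ℝ) < |t| := abs_pos.mpr ht
    have habs : ‖Hc t‖ = |Real.sin (π*S*t)| * |Real.sin (π*t)| / (π^2 * t^2) := by
      rw [hHc]
      simp only [Complex.norm_real, Real.norm_eq_abs]
      rw [abs_div, abs_mul, abs_of_pos (by positivity : (0:ℝ) < π^2 * t^2)]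
    have habs1 : ∀ u : ℝ, |Real.sin u| ≤ 1 := fun u =>
      abs_le.mpr ⟨Real.neg_one_le_sin u, Real.sin_le_one u⟩
    have hsA1 : |Real.sin (π*S*t)| ≤ 1 := habs1 _
    have hsB1 : |Real.sin (π*t)| ≤ 1 := habs1 _
    have hsA : |Real.sin (π*S*t)| ≤ π*S*|t| := by
      refine le_trans Real.abs_sin_le_abs ?_
      rw [abs_mul, abs_mul, abs_of_pos hπ0, abs_of_pos hS0]
    have hsB : |Real.sin (π*t)| ≤ π*|t| := by
      refine le_trans Real.abs_sin_le_abs ?_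
      rw [abs_mul, abs_of_pos hπ0]
    have htsq : t^2 = |t|^2 := (_root_.sq_abs t).symm
    rcases le_or_gt |t| (1/S) with hr1 | hr1
    · -- |t| ≤ 1/S : use g1
      have hmem : t ∈ Set.Icc (-(1/S)) (1/S) := by
        constructor <;> [linarith [neg_abs_le t]; linarith [le_abs_self t]]
      have : ‖Hc t‖ ≤ g1 t := by
        rw [habs, hg1, Set.indicator_of_mem hmem]
        rw [div_le_iff₀ (by positivity)]
        calc |Real.sin (π*S*t)| * |Real.sin (π*t)| ≤ (π*S*|t|) * (π*|t|) := by
              apply mul_le_mul hsA hsB (abs_nonneg _) (by positivity)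
          _ = S * (π^2*t^2) := by rw [htsq]; ring
      linarith [hg2nn t, hg3nn t, hg4nn t, hg5nn t]
    · rcases le_or_gt |t| 1 with hr2 | hr2
      · -- 1/S < |t| ≤ 1 : use g2 or g3
        have hb : ‖Hc t‖ ≤ 1/(π*|t|) := by
          rw [habs, div_le_div_iff₀ (by positivity) (by positivity)]
          calc |Real.sin (π*S*t)| * |Real.sin (π*t)| * (π*|t|)
              ≤ 1 * (π*|t|) * (π*|t|) := by
                apply mul_le_mul_of_nonneg_right _ (by positivity)
                apply mul_le_mul hsA1 hsB (abs_nonneg _) one_pos.le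
            _ = 1 * (π^2*t^2) := by rw [htsq]; ring
        rcases lt_or_gt_of_ne ht with htneg | htpos
        · have hmem : t ∈ Set.Ico (-1 : ℝ) (-(1/S)) := by
            rw [abs_of_neg htneg] at hr1 hr2
            constructor <;> linarith
          have : ‖Hc t‖ ≤ g3 t := by
            rw [hg3, Set.indicator_of_mem hmem]
            rw [abs_of_neg htneg] at hb
            exact hb
          linarith [hg1nn t, hg2nn t, hg4nn t, hg5nn t]
        · have hmem : t ∈ Set.Ioc (1/S) 1 := by
            rw [abs_of_pos htpos] at hr1 hr2
            exact ⟨hr1, hr2⟩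
          have : ‖Hc t‖ ≤ g2 t := by
            rw [hg2, Set.indicator_of_mem hmem]
            rw [abs_of_pos htpos] at hb
            exact hb
          linarith [hg1nn t, hg3nn t, hg4nn t, hg5nn t]
      · -- |t| > 1 : use g4 or g5
        have hb : ‖Hc t‖ ≤ 1/(π^2*t^2) := by
          rw [habs, div_le_div_iff₀ (by positivity) (by positivity)]
          calc |Real.sin (π*S*t)| * |Real.sin (π*t)| * (π^2*t^2)
              ≤ 1 * 1 * (π^2*t^2) := by
                apply mul_le_mul_of_nonneg_right _ (by positivity)
                apply mul_le_mul hsA1 hsB1 (abs_nonneg _) one_pos.le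
            _ = 1 * (π^2*t^2) := by ring
        rcases lt_or_gt_of_ne ht with htneg | htpos
        · have hmem : -t ∈ Set.Ioi (1:ℝ) := by
            rw [abs_of_neg htneg] at hr2; exact hr2
          have : ‖Hc t‖ ≤ g5 t := by
            rw [hg5]
            simp only [hg4]
            rw [Set.indicator_of_mem hmem]
            calc ‖Hc t‖ ≤ 1/(π^2*t^2) := hb
              _ = 1/(π^2*(-t)^2) := by ring_nf
          linarith [hg1nn t, hg2nn t, hg3nn t, hg4nn t]
        · have hmem : t ∈ Set.Ioi (1:ℝ) := by
            rw [abs_of_pos htpos] at hr2; exact hr2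
          have : ‖Hc t‖ ≤ g4 t := by
            rw [hg4, Set.indicator_of_mem hmem]
            exact hb
          linarith [hg1nn t, hg2nn t, hg3nn t, hg5nn t]
  have hae : ∀ᵐ t : ℝ, ‖Hc t‖ ≤ g1 t + g2 t + g3 t + g4 t + g5 t := by
    have h0 : ∀ᵐ t : ℝ, t ≠ 0 := by
      simp only [MeasureTheory.ae_iff, not_not]
      rw [Set.setOf_eq_eq_singleton]
      exact Real.volume_singleton
    filter_upwards [h0] with t ht using hptwise t ht
  have i12 : Integrable (fun t => g1 t + g2 t) := ig1.add ig2
  have i123 : Integrable (fun t => g1 t + g2 t + g3 t) := i12.add ig3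
  have i1234 : Integrable (fun t => g1 t + g2 t + g3 t + g4 t) := i123.add ig4
  have hgsum : Integrable (fun t => g1 t + g2 t + g3 t + g4 t + g5 t) := i1234.add ig5
  have hint : Integrable Hc := hgsum.mono' hmeas hae
  refine ⟨hint, ?_⟩
  have hmono : (∫ t : ℝ, ‖Hc t‖) ≤ ∫ t : ℝ, (g1 t + g2 t + g3 t + g4 t + g5 t) :=
    integral_mono_ae hint.norm hgsum hae
  have hval : (∫ t : ℝ, (g1 t + g2 t + g3 t + g4 t + g5 t))
      = 2 + 1/π * Real.log S + 1/π * Real.log S + 1/π^2 + 1/π^2 := by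
    rw [integral_add i1234 ig5, integral_add i123 ig4, integral_add i12 ig3,
      integral_add ig1 ig2, hI1, hI2, hI3, hI4, hI5]
  rw [hval] at hmono
  have hlogS : 0 ≤ Real.log S := Real.log_nonneg (by linarith)
  have h1 : 1/π * Real.log S ≤ 1/2 * Real.log S := by
    apply mul_le_mul_of_nonneg_right _ hlogS
    rw [div_le_div_iff₀ hπ0 two_pos]
    linarith
  have h2 : 1/π^2 ≤ (1:ℝ)/2 := by
    rw [div_le_div_iff₀ (by positivity) two_pos]
    nlinarith
  linarith

/-- Unsmoothing kernel (variant of Lemma 9 of Duke–Friedlander–Iwaniec):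
for any integer `x ≥ 1` there is an integrable `h : ℝ → ℂ` with
`∫|h| ≤ 7 + log x` whose Fourier transform at integers is the indicator of
`[-x, x]`. -/
theorem unsmoothing_kernel (x : ℕ) (hx : 1 ≤ x) :
    ∃ h : ℝ → ℂ, Integrable h ∧
      (∫ t : ℝ, ‖h t‖) ≤ 7 + Real.log x ∧
      ∀ n : ℤ, (∫ t : ℝ, h t * Complex.exp (2 * Real.pi * Complex.I * n * t))
        = if |n| ≤ (x : ℤ) then 1 else 0 := by
  have hπ0 := Real.pi_pos
  set X : ℝ := (x : ℝ) with hX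
  have hX1 : (1:ℝ) ≤ X := Nat.one_le_cast.mpr hx
  set Tr : ℝ → ℝ := fun ξ => max ((X+1) - |ξ|) 0 - max (X - |ξ|) 0 with hTr
  set Tc : ℝ → ℂ := fun ξ => ((Tr ξ : ℝ) : ℂ) with hTcdef
  have hTcont : Continuous Tc := by
    apply Complex.continuous_ofReal.comp
    exact ((continuous_const.sub _root_.continuous_abs).max continuous_const).sub
      ((continuous_const.sub _root_.continuous_abs).max continuous_const)
  have hTzero : ∀ ξ : ℝ, X + 1 ≤ |ξ| → Tc ξ = 0 := by
    intro ξ hξ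
    rw [hTcdef]
    simp only [hTr]
    rw [max_eq_right (by linarith : (X+1) - |ξ| ≤ 0), max_eq_right (by linarith : X - |ξ| ≤ 0)]
    norm_num
  have hTsupp : HasCompactSupport Tc := by
    apply HasCompactSupport.intro (isCompact_Icc (a := -(X+1)) (b := X+1))
    intro ξ hξ
    apply hTzero
    simp only [Set.mem_Icc, not_and_or, not_le] at hξ
    rcases abs_cases ξ with ⟨h1, h2⟩ | ⟨h1, h2⟩ <;> rcases hξ with h | h <;> linarith
  have hTint : Integrable Tc := hTcont.integrable_of_hasCompactSupport hTsupp
  set S : ℝ := 2*X+1 with hSdef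
  set Hc : ℝ → ℂ := fun t => ((Real.sin (π*S*t) * Real.sin (π*t) / (π^2*t^2) : ℝ) : ℂ) with hHc
  have hFT : ∀ t : ℝ, t ≠ 0 → FourierTransform.fourier Tc t = Hc t := by
    intro t ht
    rw [Real.fourier_real_eq_integral_exp_smul]
    have hint_tri : ∀ b : ℝ, 0 < b → Integrable (fun ξ : ℝ =>
        Complex.exp (((-2 * π * ξ * t : ℝ) : ℂ) * Complex.I) • ((max (b - |ξ|) 0 : ℝ) : ℂ)) := by
      intro b hb
      apply Continuous.integrable_of_hasCompactSupport
      · apply Continuous.fun_smul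
        · apply Complex.continuous_exp.comp
          exact (Complex.continuous_ofReal.comp (by continuity)).mul continuous_const
        · exact Complex.continuous_ofReal.comp
            ((continuous_const.sub _root_.continuous_abs).max continuous_const)
      · apply HasCompactSupport.intro (isCompact_Icc (a := -b) (b := b))
        intro ξ hξ
        have hbξ : b ≤ |ξ| := by
          simp only [Set.mem_Icc, not_and_or, not_le] at hξ
          rcases abs_cases ξ with ⟨h1, h2⟩ | ⟨h1, h2⟩ <;> rcases hξ with h | h <;> linarith
        simp [max_eq_right (by linarith : b - |ξ| ≤ 0)]
    have hsplit : (fun ξ : ℝ => Complex.exp (((-2 * π * ξ * t : ℝ) : ℂ) * Complex.I) • Tc ξ)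
        = fun ξ : ℝ => Complex.exp (((-2 * π * ξ * t : ℝ) : ℂ) * Complex.I)
              • ((max ((X+1) - |ξ|) 0 : ℝ) : ℂ)
            - Complex.exp (((-2 * π * ξ * t : ℝ) : ℂ) * Complex.I)
              • ((max (X - |ξ|) 0 : ℝ) : ℂ) := by
      funext ξ
      rw [hTcdef]
      simp only [hTr]
      rw [Complex.ofReal_sub, smul_sub]
    rw [hsplit, integral_sub (hint_tri (X+1) (by linarith)) (hint_tri X (by linarith)),
      tri_ft (X+1) t (by linarith) ht, tri_ft X t (by linarith) ht]
    have hid : Real.sin (π*(X+1)*t)^2 - Real.sin (π*X*t)^2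
        = Real.sin (π*S*t) * Real.sin (π*t) := by
      have key : ∀ A B : ℝ, Real.sin A^2 - Real.sin B^2 = Real.sin (A+B) * Real.sin (A-B) := by
        intro A B
        rw [Real.sin_add, Real.sin_sub]
        nlinarith [Real.sin_sq_add_cos_sq A, Real.sin_sq_add_cos_sq B]
      have h2 := key (π*(X+1)*t) (π*X*t)
      rw [show π*(X+1)*t + π*X*t = π*S*t by rw [hSdef]; ring,
        show π*(X+1)*t - π*X*t = π*t by ring] at h2
      exact h2
    rw [hHc, ← Complex.ofReal_sub, ← sub_div, hid]
  obtain ⟨hHint, hHbound⟩ := kernel_bound S (by rw [hSdef]; linarith)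
  have h0ae : ∀ᵐ t : ℝ, t ≠ 0 := by
    simp only [MeasureTheory.ae_iff, not_not]
    rw [Set.setOf_eq_eq_singleton]
    exact Real.volume_singleton
  have haeFT : FourierTransform.fourier Tc =ᵐ[volume] Hc := by
    filter_upwards [h0ae] with t ht using hFT t ht
  have hFTint : Integrable (FourierTransform.fourier Tc) := hHint.congr haeFT.symm
  refine ⟨FourierTransform.fourier Tc, hFTint, ?_, ?_⟩
  · have heq : (∫ t : ℝ, ‖FourierTransform.fourier Tc t‖) = ∫ t : ℝ, ‖Hc t‖ :=
      integral_congr_ae (haeFT.mono fun t h => by simp only [h])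
    rw [heq]
    refine le_trans hHbound ?_
    have h1 : Real.log S ≤ Real.log (3*X) :=
      Real.log_le_log (by rw [hSdef]; linarith) (by rw [hSdef]; linarith)
    rw [Real.log_mul (by norm_num) (by linarith)] at h1
    have h3 : Real.log 3 ≤ 2 := by
      have := Real.log_le_sub_one_of_pos (by norm_num : (0:ℝ) < 3)
      linarith
    rw [hX] at *
    linarith
  · intro n
    have step1 : (∫ t : ℝ, FourierTransform.fourier Tc t
          * Complex.exp (2 * Real.pi * Complex.I * n * t))
        = FourierTransform.fourier (FourierTransform.fourier Tc) (-(n:ℝ)) := by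
      rw [Real.fourier_real_eq_integral_exp_smul]
      congr 1
      funext t
      rw [smul_eq_mul, mul_comm]
      congr 1
      push_cast
      ring
    have step2 : FourierTransform.fourier (FourierTransform.fourier Tc) (-(n:ℝ))
        = FourierTransform.fourierInv (FourierTransform.fourier Tc) (n:ℝ) :=
      (Real.fourierInv_eq_fourier_neg _ _).symm
    have step3 : FourierTransform.fourierInv (FourierTransform.fourier Tc) (n:ℝ) = Tc (n:ℝ) :=
      hTint.fourierInv_fourier_eq hFTint hTcont.continuousAt
    rw [step1, step2, step3]
    by_cases h : |n| ≤ (x : ℤ)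
    · rw [if_pos h]
      have habs : |(n:ℝ)| ≤ X := by
        rw [hX, ← Int.cast_abs]
        exact_mod_cast h
      rw [hTcdef]
      simp only [hTr]
      rw [max_eq_left (by linarith : (0:ℝ) ≤ (X+1) - |(n:ℝ)|),
        max_eq_left (by linarith : (0:ℝ) ≤ X - |(n:ℝ)|)]
      push_cast
      ring
    · rw [if_neg h]
      have habs : X + 1 ≤ |(n:ℝ)| := by
        have : (x:ℤ) + 1 ≤ |n| := by omega
        rw [hX, ← Int.cast_abs]
        exact_mod_cast this
      rw [hTzero _ habs]
end

section
/- Fix T ≥ 2 and real numbers c, x, θ with x > 0, θ ≠ 0. Let f(τ) = log(8π³·xN/(|θN|·|T+τ|·|T−τ|)) (the derivative of the Voronoi phase). Suppose |τ| ≍ |θN| with T^{2/3} ≤ |θN| ≤ T^{1−ε} and T ≥ T₀(ε). If |log(8π³ xN/(|θN| T²))| > 100 (θN)²/T², then for all τ in the support (|τ| between |θN|/8 and 8|θN|, |τ±T| > √T), |f(τ)| ≥ c₀ · |log(8π³ xN/(|θN| T²))| for an absolute constant c₀ > 0. -/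
open Real

set_option maxHeartbeats 1000000 in
/-- Phase-derivative lower bound in Lemma `phibound1`: with
`f(τ) = log(8π³xN/(θN·|T+τ|·|T−τ|))`, if `T^{2/3} ≤ θN ≤ T^{1−ε}`, `T` is large,
and the stationary condition fails, i.e.
`|log(8π³xN/(θN T²))| > 100 (θN)²/T²`, then on the support
(`θN/8 ≤ |τ| ≤ 8θN`, `|τ±T| > √T`) one has
`|f(τ)| ≥ c₀ |log(8π³xN/(θN T²))|` for an absolute constant `c₀ > 0`. -/
theorem phase_derivative_lower_bound :
    ∃ c₀ > (0 : ℝ), ∀ ε > (0 : ℝ), ∃ T₀ : ℝ, ∀ (T x θ N τ : ℝ),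
      T ≥ T₀ → x > 0 → θ > 0 → N > 0 →
      T ^ ((2 : ℝ) / 3) ≤ θ * N → θ * N ≤ T ^ (1 - ε) →
      |Real.log (8 * Real.pi ^ 3 * x * N / (θ * N * T ^ 2))|
        > 100 * (θ * N) ^ 2 / T ^ 2 →
      θ * N / 8 ≤ |τ| → |τ| ≤ 8 * (θ * N) →
      |τ + T| > Real.sqrt T → |τ - T| > Real.sqrt T →
      |Real.log (8 * Real.pi ^ 3 * x * N / (θ * N * |T + τ| * |T - τ|))|
        ≥ c₀ * |Real.log (8 * Real.pi ^ 3 * x * N / (θ * N * T ^ 2))| := by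
  refine ⟨1/3, by norm_num, fun ε hε => ⟨max 2 ((8320 : ℝ) ^ (1/(2*ε))), ?_⟩⟩
  intro T x θ N τ hT hx hθ hN hlow hup hbig hτl hτu hst1 hst2
  have hT2 : (2 : ℝ) ≤ T := le_trans (le_max_left _ _) hT
  have hTpos : (0 : ℝ) < T := by linarith
  have hKpos : (0 : ℝ) < θ * N := by positivity
  -- T^(2ε) ≥ 8320
  have hT8320 : (8320 : ℝ) ≤ T ^ (2*ε) := by
    have h1 : ((8320 : ℝ) ^ (1/(2*ε))) ^ (2*ε) ≤ T ^ (2*ε) :=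
      Real.rpow_le_rpow (by positivity) (le_trans (le_max_right _ _) hT)
        (by positivity)
    rwa [← Real.rpow_mul (by norm_num : (0:ℝ) ≤ 8320), one_div,
      inv_mul_cancel₀ (by positivity), Real.rpow_one] at h1
  have hεsq : T ^ ε * T ^ ε = T ^ (2*ε) := by
    rw [← Real.rpow_add hTpos]; ring_nf
  have hεpos : (0 : ℝ) < T ^ ε := Real.rpow_pos_of_pos hTpos ε
  have hε8 : (8 : ℝ) < T ^ ε := by nlinarith
  have h1εpos : (0 : ℝ) < T ^ (1 - ε) := Real.rpow_pos_of_pos hTpos _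
  have hsplit : T ^ (1 - ε) * T ^ ε = T := by
    rw [← Real.rpow_add hTpos]; norm_num
  -- |τ| < T
  have hτT : |τ| < T := by
    calc |τ| ≤ 8 * (θ * N) := hτu
    _ ≤ 8 * T ^ (1 - ε) := by nlinarith
    _ < T ^ (1 - ε) * T ^ ε := by nlinarith
    _ = T := hsplit
  have hτabs : -T < τ ∧ τ < T := abs_lt.mp hτT
  have hTτ1 : (0 : ℝ) < T + τ := by linarith [hτabs.1]
  have hTτ2 : (0 : ℝ) < T - τ := by linarith [hτabs.2]
  -- u = τ²/T² ≤ 64 K²/T² ≤ 1/130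
  have hτsq : τ ^ 2 ≤ 64 * (θ * N) ^ 2 := by
    have := sq_abs τ
    nlinarith [abs_nonneg τ]
  have hK2 : (θ * N) ^ 2 * T ^ (2*ε) ≤ T ^ 2 := by
    have h1 : (θ * N) ^ 2 ≤ T ^ (1-ε) * T ^ (1-ε) := by nlinarith
    have h2 : T ^ (1-ε) * T ^ (1-ε) * T ^ (2*ε) = T ^ 2 := by
      rw [← Real.rpow_add hTpos, ← Real.rpow_add hTpos, ← Real.rpow_two]
      ring_nf
    calc (θ * N) ^ 2 * T ^ (2*ε) ≤ T ^ (1-ε) * T ^ (1-ε) * T ^ (2*ε) :=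
          mul_le_mul_of_nonneg_right h1 (le_of_lt (Real.rpow_pos_of_pos hTpos _))
      _ = T ^ 2 := h2
  have hKT : (θ * N) ^ 2 / T ^ 2 ≤ 1 / 8320 := by
    rw [div_le_div_iff₀ (by positivity) (by norm_num)]
    have h3 : (θ * N) ^ 2 * 8320 ≤ (θ * N) ^ 2 * T ^ (2*ε) :=
      mul_le_mul_of_nonneg_left hT8320 (sq_nonneg (θ * N))
    linarith
  have huK : τ ^ 2 / T ^ 2 ≤ 64 * ((θ * N) ^ 2 / T ^ 2) := by
    rw [← mul_div_assoc]
    gcongr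
  have hu : τ ^ 2 / T ^ 2 ≤ 1 / 130 := by linarith
  have hunonneg : (0 : ℝ) ≤ τ ^ 2 / T ^ 2 := by positivity
  set u := τ ^ 2 / T ^ 2 with hu_def
  have h1u : (129 : ℝ)/130 ≤ 1 - u := by linarith
  have h1upos : (0 : ℝ) < 1 - u := by linarith
  set A := 8 * Real.pi ^ 3 * x * N with hA
  have hApos : (0 : ℝ) < A := by
    have := Real.pi_pos
    positivity
  -- key algebraic identity
  have hden : θ * N * (T + τ) * (T - τ) = (θ * N * T ^ 2) * (1 - u) := by
    rw [hu_def]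
    have hT2ne : (T : ℝ) ^ 2 ≠ 0 := by positivity
    field_simp
    ring
  have key : A / (θ * N * |T + τ| * |T - τ|) = (A / (θ * N * T ^ 2)) / (1 - u) := by
    rw [abs_of_pos hTτ1, abs_of_pos hTτ2, hden, ← div_div]
  rw [key, Real.log_div (by positivity) (by positivity)]
  -- bound |log(1-u)|
  have hlog_nonpos : Real.log (1 - u) ≤ 0 :=
    Real.log_nonpos (by linarith) (by linarith)
  have hlog_ge : -Real.log (1 - u) ≤ u / (1 - u) := by
    have h := Real.log_le_sub_one_of_pos (show (0:ℝ) < (1-u)⁻¹ by positivity)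
    rw [Real.log_inv] at h
    have : (1 - u)⁻¹ - 1 = u / (1 - u) := by field_simp; ring
    linarith [this ▸ h]
  have hfrac : u / (1 - u) ≤ (65/64) * u := by
    rw [div_le_iff₀ h1upos]
    nlinarith
  have hlogbound : |Real.log (1 - u)| ≤ 65 * ((θ * N) ^ 2 / T ^ 2) := by
    rw [abs_of_nonpos hlog_nonpos]
    calc -Real.log (1 - u) ≤ u / (1 - u) := hlog_ge
      _ ≤ (65/64) * u := hfrac
      _ ≤ 65 * ((θ * N) ^ 2 / T ^ 2) := by nlinarith
  have habs : |Real.log (A / (θ * N * T ^ 2))| - |Real.log (1 - u)| ≤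
      |Real.log (A / (θ * N * T ^ 2)) - Real.log (1 - u)| :=
    abs_sub_abs_le_abs_sub _ _
  have hbig' : 100 * (θ * N) ^ 2 / T ^ 2 = 100 * ((θ * N) ^ 2 / T ^ 2) := by ring
  rw [hbig'] at hbig
  nlinarith [abs_nonneg (Real.log (A / (θ * N * T ^ 2)))]
end
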